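/- arXiv:1002.0467 — 2 statements merged into one kernel-verified Lean document; each statement's English description precedes it below -/
import Mathlib

section
/- Let $N = 2m+1$ be a positive odd integer and let $c \in \mathbb{Z}/N\mathbb{Z}$. The number of multisets of size $4$ of elements of $\mathbb{Z}/N\mathbb{Z}$ whose sum is $c$ equals $(m+1)(m+2)(2m+3)/6$, independently of $c$. -/
lemma six_dvd_aux (m : ℕ) : 6 ∣ (m + 1) * (m + 2) * (2 * m + 3) := by
  induction m with
  | zero => decide
  | succ n ih =>
    obtain ⟨k, hk⟩ := ih
    refine ⟨k + (n + 2) ^ 2, ?_⟩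
    have h : (n + 1 + 1) * (n + 1 + 2) * (2 * (n + 1) + 3)
        = (n + 1) * (n + 2) * (2 * n + 3) + 6 * (n + 2) ^ 2 := by ring
    rw [h, hk]; ring

lemma sum_shift (n : ℕ) (s : Sym (ZMod n) 4) (t : ZMod n) :
    ((s.map (· + t)) : Multiset (ZMod n)).sum = (s : Multiset (ZMod n)).sum + 4 * t := by
  rw [Sym.coe_map]
  have h : ((· + t) : ZMod n → ZMod n) = fun x => id x + (Function.const _ t) x := rfl
  rw [h, Multiset.sum_map_add]
  simp [Multiset.map_id', s.prop, Function.const, Multiset.map_const]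
  ring

theorem stmt_4 (m : ℕ) (c : ZMod (2 * m + 1)) :
    (Finset.univ.filter
        fun s : Sym (ZMod (2 * m + 1)) 4 => (s : Multiset (ZMod (2 * m + 1))).sum = c).card
      = (m + 1) * (m + 2) * (2 * m + 3) / 6 := by
  have hunit : IsUnit (4 : ZMod (2 * m + 1)) := by
    have h4 : ((4 : ℕ) : ZMod (2 * m + 1)) = (4 : ZMod (2 * m + 1)) := by push_cast; ring
    rw [← h4, ZMod.isUnit_iff_coprime]
    have h2 : Nat.Coprime 2 (2 * m + 1) := Nat.coprime_two_left.mpr ⟨m, by omega⟩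
    simpa using (Nat.Coprime.pow_left 2 h2)
  have hcard : ∀ c d : ZMod (2 * m + 1),
      (Finset.univ.filter
        fun s : Sym (ZMod (2 * m + 1)) 4 => (s : Multiset (ZMod (2 * m + 1))).sum = c).card
      = (Finset.univ.filter
        fun s : Sym (ZMod (2 * m + 1)) 4 => (s : Multiset (ZMod (2 * m + 1))).sum = d).card := by
    intro c d
    set t : ZMod (2 * m + 1) := (4 : ZMod (2 * m + 1))⁻¹ * (d - c) with ht
    have h4t : 4 * t = d - c := by
      rw [ht, ← mul_assoc, ZMod.mul_inv_of_unit _ hunit, one_mul]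
    refine Finset.card_bij (fun s _ => s.map (· + t)) ?_ ?_ ?_
    · intro s hs
      simp only [Finset.mem_filter, Finset.mem_univ, true_and] at hs ⊢
      rw [sum_shift, hs, h4t]; ring
    · intro s1 h1 s2 h2 h
      have hinj : Function.Injective ((· + t) : ZMod (2 * m + 1) → ZMod (2 * m + 1)) := add_left_injective t
      exact Sym.map_injective hinj _ h
    · intro s hs
      simp only [Finset.mem_filter, Finset.mem_univ, true_and] at hs
      refine ⟨s.map (· + (-t)), ?_, ?_⟩
      · simp only [Finset.mem_filter, Finset.mem_univ, true_and]
        rw [sum_shift, hs]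
        have h5 : (4 : ZMod (2 * m + 1)) * (-t) = -(d - c) := by rw [mul_neg, h4t]
        rw [h5]; ring
      · simp only [Sym.map_map]
        have h6 : (((· + t) ∘ (· + (-t))) : ZMod (2 * m + 1) → ZMod (2 * m + 1)) = id := by
          funext x; simp
        rw [h6, Sym.map_id]
  have htot : Fintype.card (Sym (ZMod (2 * m + 1)) 4)
      = ∑ d : ZMod (2 * m + 1), (Finset.univ.filter
        fun s : Sym (ZMod (2 * m + 1)) 4 => (s : Multiset (ZMod (2 * m + 1))).sum = d).card :=
    Finset.card_eq_sum_card_fiberwise (fun s _ => Finset.mem_univ _)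
  have hconst : ∑ d : ZMod (2 * m + 1), (Finset.univ.filter
        fun s : Sym (ZMod (2 * m + 1)) 4 => (s : Multiset (ZMod (2 * m + 1))).sum = d).card
      = (2 * m + 1) * (Finset.univ.filter
        fun s : Sym (ZMod (2 * m + 1)) 4 => (s : Multiset (ZMod (2 * m + 1))).sum = c).card := by
    rw [Finset.sum_congr rfl (fun d _ => hcard d c), Finset.sum_const, smul_eq_mul,
      Finset.card_univ, ZMod.card]
  obtain ⟨k, hk⟩ := six_dvd_aux m
  have hdiv : (m + 1) * (m + 2) * (2 * m + 3) / 6 = k := by omega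
  have hsym : Fintype.card (Sym (ZMod (2 * m + 1)) 4) = (2 * m + 4).choose 4 := by
    rw [Sym.card_sym_eq_choose, ZMod.card]; congr 1
  have hchoose : (2 * m + 4).choose 4 = (2 * m + 1) * k := by
    rw [Nat.choose_eq_descFactorial_div_factorial]
    have hd : (2 * m + 4).descFactorial 4 = 24 * ((2 * m + 1) * k) := by
      simp only [Nat.descFactorial]
      have e0 : 2 * m + 4 - 0 = 2 * m + 4 := by omega
      have e1 : 2 * m + 4 - 1 = 2 * m + 3 := by omega
      have e2 : 2 * m + 4 - 2 = 2 * m + 2 := by omega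
      have e3 : 2 * m + 4 - 3 = 2 * m + 1 := by omega
      rw [e0, e1, e2, e3]
      have h7 : (2 * m + 1) * ((2 * m + 2) * ((2 * m + 3) * ((2 * m + 4) * 1)))
          = 4 * (2 * m + 1) * ((m + 1) * (m + 2) * (2 * m + 3)) := by ring
      rw [h7, hk]; ring
    rw [hd]
    norm_num [Nat.factorial]
  have : (2 * m + 1) * (Finset.univ.filter
        fun s : Sym (ZMod (2 * m + 1)) 4 => (s : Multiset (ZMod (2 * m + 1))).sum = c).card = (2 * m + 1) * k := by
    rw [← hconst, ← htot, hsym, hchoose]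
  rw [hdiv]
  have hpos : 0 < 2 * m + 1 := by omega
  exact Nat.eq_of_mul_eq_mul_left hpos this
end

section
/- Let $p$ be a prime and $A \in M_n(\mathbb{Z}_p)$ with $\det A \neq 0$. If $B \in M_n(\mathbb{Z}_p)$ satisfies $B \equiv A \pmod{p^m}$ for some integer $m > v_p(\det A)$, then $\det B \neq 0$ and $BA^{-1} \in GL_n(\mathbb{Z}_p)$, i.e. $BA^{-1}$ and its inverse both have entries in $\mathbb{Z}_p$. -/
/-- If `A ∈ M_n(ℤ_p)` has nonzero determinant and `B ≡ A (mod p^m)` with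
`m > v_p(det A)`, then `det B ≠ 0` and `B A⁻¹ ∈ GL_n(ℤ_p)`, i.e. `B = U A` for some
matrix `U` over `ℤ_p` whose determinant is a `p`-adic unit. -/
theorem stmt_11 (p : ℕ) [Fact p.Prime] (n : ℕ) (A B : Matrix (Fin n) (Fin n) ℤ_[p])
    (hA : A.det ≠ 0) (m : ℕ) (hm : (A.det).valuation < (m : ℤ))
    (hB : ∀ i j, (p : ℤ_[p]) ^ m ∣ (B i j - A i j)) :
    B.det ≠ 0 ∧ ∃ U : Matrix (Fin n) (Fin n) ℤ_[p], IsUnit U.det ∧ B = U * A := by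
  classical
  -- C such that B = A + p^m • C
  set C : Matrix (Fin n) (Fin n) ℤ_[p] :=
    Matrix.of fun i j => Classical.choose (hB i j) with hC
  have hBC : B = A + ((p : ℤ_[p]) ^ m) • C := by
    ext i j
    have := Classical.choose_spec (hB i j)
    simp only [Matrix.add_apply, Matrix.smul_apply, hC, Matrix.of_apply, smul_eq_mul]
    linear_combination this
  set k : ℕ := (A.det).valuation with hk
  have hkval : (k : ℤ) = (A.det).valuation := rfl
  have hkm : k < m := by exact_mod_cast hkval ▸ hm
  set u : ℤ_[p]ˣ := PadicInt.unitCoeff hA with hu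
  have hspec : A.det = (u : ℤ_[p]) * (p : ℤ_[p]) ^ k := PadicInt.unitCoeff_spec hA
  set t : ℤ_[p] := ((u⁻¹ : ℤ_[p]ˣ) : ℤ_[p]) * (p : ℤ_[p]) ^ (m - k) with ht
  have hdt : A.det * t = (p : ℤ_[p]) ^ m := by
    rw [hspec, ht]
    have : (p : ℤ_[p]) ^ k * (p : ℤ_[p]) ^ (m - k) = (p : ℤ_[p]) ^ m := by
      rw [← pow_add]; congr 1; omega
    calc (u : ℤ_[p]) * (p : ℤ_[p]) ^ k * (((u⁻¹ : ℤ_[p]ˣ) : ℤ_[p]) * (p : ℤ_[p]) ^ (m - k))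
        = ((u : ℤ_[p]) * ((u⁻¹ : ℤ_[p]ˣ) : ℤ_[p])) * ((p : ℤ_[p]) ^ k * (p : ℤ_[p]) ^ (m - k)) := by
          ring
      _ = (p : ℤ_[p]) ^ m := by rw [this, u.mul_inv]; ring
  have hpt : (p : ℤ_[p]) ∣ t := by
    refine Dvd.dvd.mul_left ?_ _
    exact dvd_pow_self _ (by omega)
  set U : Matrix (Fin n) (Fin n) ℤ_[p] := 1 + t • (C * A.adjugate) with hU
  have hBUA : B = U * A := by
    rw [hU, hBC, Matrix.add_mul, Matrix.one_mul, Matrix.smul_mul, Matrix.mul_assoc,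
      Matrix.adjugate_mul, Matrix.mul_smul, Matrix.mul_one, smul_smul, mul_comm t, hdt]
  -- det U is a unit: reduce mod p
  have hdetU : IsUnit U.det := by
    by_contra h
    have hmem : U.det ∈ RingHom.ker (PadicInt.toZMod (p := p)) := by
      rw [PadicInt.ker_toZMod]
      exact IsLocalRing.mem_maximalIdeal _ |>.2 h
    have hmap : U.map (PadicInt.toZMod (p := p)) = 1 := by
      ext i j
      obtain ⟨s, hs⟩ := hpt
      simp only [hU, Matrix.map_apply, Matrix.add_apply, Matrix.smul_apply, smul_eq_mul, hs,
        map_add, map_mul, map_natCast, ZMod.natCast_self, zero_mul, add_zero]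
      rcases eq_or_ne i j with rfl | hij
      · simp [Matrix.one_apply]
      · simp [Matrix.one_apply, hij]
    have : PadicInt.toZMod U.det = 1 := by
      rw [RingHom.map_det, RingHom.mapMatrix_apply, hmap, Matrix.det_one]
    rw [RingHom.mem_ker] at hmem
    rw [hmem] at this
    exact zero_ne_one this
  refine ⟨?_, U, hdetU, hBUA⟩
  rw [hBUA, Matrix.det_mul]
  exact mul_ne_zero hdetU.ne_zero hA
end
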